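/- Let A[i, j, t] denote the minimum ℓ-cost of a t-CC assignment for the subelection consisting of voters v_1, ..., v_i and candidates c_1, ..., c_j of a single-crossing election whose first voter ranks c_1 ≻ ⋯ ≻ c_m. Then for i ≥ 1, j ≥ 2, t ≥ 2: A[i, j, t] = min( A[i, j−1, t], min over 0 ≤ i* < i of ℓ( A[i*, j−1, t−1], α(pos_{v_{i*+1}}(c_j)), ..., α(pos_{v_i}(c_j)) ) ), where ℓ applied to a list of values is their sum (utilitarian case) or their maximum (egalitarian case). -/

import Mathlib

/-- Aggregation of a list of dissatisfaction values: sum in the utilitarian case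
(`util = true`), maximum in the egalitarian case (`util = false`). -/
def aggCC {ι : Type*} (util : Bool) (s : Finset ι) (f : ι → ℕ) : ℕ :=
  if util then ∑ l ∈ s, f l else s.sup f

/-- Combining a previous-cost value with the aggregated cost of a new block:
sum in the utilitarian case, maximum in the egalitarian case. -/
def combineCC (util : Bool) (a b : ℕ) : ℕ :=
  if util then a + b else max a b

/-- `AcostCC prefs α util i j t` is the optimal `ℓ`-aggregated dissatisfaction of a
`t`-CC assignment for the subelection on the first `i` voters and the first `j`
candidates. -/
noncomputable def AcostCC {m n : ℕ} (prefs : Fin n → (Fin m ≃ Fin m)) (α : ℕ → ℕ)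
    (util : Bool) (i j t : ℕ) : ℕ :=
  sInf { w : ℕ | ∃ Φ : Fin n → Fin m,
    (∀ l : Fin n, (l : ℕ) < i → ((Φ l : ℕ) < j)) ∧
    ((Finset.univ.filter (fun l : Fin n => (l : ℕ) < i)).image Φ).card ≤ t ∧
    w = aggCC util (Finset.univ.filter (fun l : Fin n => (l : ℕ) < i))
          (fun l => α ((prefs l (Φ l) : ℕ) + 1)) }

lemma aggCC_mono {ι : Type*} (u : Bool) {s : Finset ι} {f g : ι → ℕ}
    (h : ∀ x ∈ s, f x ≤ g x) : aggCC u s f ≤ aggCC u s g := by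
  cases u
  · simpa [aggCC] using Finset.sup_mono_fun h
  · simpa [aggCC] using Finset.sum_le_sum h

lemma aggCC_congr {ι : Type*} (u : Bool) {s : Finset ι} {f g : ι → ℕ}
    (h : ∀ x ∈ s, f x = g x) : aggCC u s f = aggCC u s g := by
  cases u
  · simpa [aggCC] using Finset.sup_congr rfl h
  · simpa [aggCC] using Finset.sum_congr rfl h

lemma aggCC_union {ι : Type*} [DecidableEq ι] (u : Bool) {s₁ s₂ : Finset ι}
    (h : Disjoint s₁ s₂) (f : ι → ℕ) :
    aggCC u (s₁ ∪ s₂) f = combineCC u (aggCC u s₁ f) (aggCC u s₂ f) := by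
  cases u
  · simp [aggCC, combineCC, Finset.sup_union]
  · simp [aggCC, combineCC, Finset.sum_union h]

lemma combineCC_mono {a a' b b' : ℕ} (u : Bool) (h1 : a ≤ a') (h2 : b ≤ b') :
    combineCC u a b ≤ combineCC u a' b' := by
  cases u <;> simp [combineCC] <;> omega

lemma acost_le_of {m n : ℕ} (prefs : Fin n → (Fin m ≃ Fin m)) (α : ℕ → ℕ) (u : Bool)
    {i j t : ℕ} (Φ : Fin n → Fin m)
    (h1 : ∀ l : Fin n, (l : ℕ) < i → ((Φ l : ℕ) < j))
    (h2 : ((Finset.univ.filter (fun l : Fin n => (l : ℕ) < i)).image Φ).card ≤ t) :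
    AcostCC prefs α u i j t ≤
      aggCC u (Finset.univ.filter (fun l : Fin n => (l : ℕ) < i))
        (fun l => α ((prefs l (Φ l) : ℕ) + 1)) :=
  Nat.sInf_le ⟨Φ, h1, h2, rfl⟩

lemma acost_attained {m n : ℕ} (prefs : Fin n → (Fin m ≃ Fin m)) (α : ℕ → ℕ) (u : Bool)
    {i j t : ℕ} (hm : 0 < m) (hj : 0 < j) (ht : 0 < t) :
    ∃ Φ : Fin n → Fin m,
      (∀ l : Fin n, (l : ℕ) < i → ((Φ l : ℕ) < j)) ∧
      ((Finset.univ.filter (fun l : Fin n => (l : ℕ) < i)).image Φ).card ≤ t ∧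
      AcostCC prefs α u i j t =
        aggCC u (Finset.univ.filter (fun l : Fin n => (l : ℕ) < i))
          (fun l => α ((prefs l (Φ l) : ℕ) + 1)) := by
  have hne : { w : ℕ | ∃ Φ : Fin n → Fin m,
      (∀ l : Fin n, (l : ℕ) < i → ((Φ l : ℕ) < j)) ∧
      ((Finset.univ.filter (fun l : Fin n => (l : ℕ) < i)).image Φ).card ≤ t ∧
      w = aggCC u (Finset.univ.filter (fun l : Fin n => (l : ℕ) < i))
            (fun l => α ((prefs l (Φ l) : ℕ) + 1)) }.Nonempty := by
    refine ⟨_, fun _ => ⟨0, hm⟩, fun l _ => hj, ?_, rfl⟩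
    refine le_trans (Finset.card_le_card
      (Finset.image_subset_iff.mpr (fun x _ => Finset.mem_singleton_self _))) ?_
    simp; omega
  exact Nat.sInf_mem hne

theorem cc_dp_recurrence {m n : ℕ} (hn : 0 < n)
    (prefs : Fin n → (Fin m ≃ Fin m))
    (hfirst : prefs ⟨0, hn⟩ = Equiv.refl (Fin m))
    (hsc : ∀ a b : Fin m, (prefs ⟨0, hn⟩ a : ℕ) < prefs ⟨0, hn⟩ b →
      ∃ t : ℕ, ∀ v : Fin n, ((prefs v a : ℕ) < prefs v b ↔ (v : ℕ) < t))
    (α : ℕ → ℕ) (hα : Monotone α) (hα1 : α 1 = 0)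
    (util : Bool) (i j t : ℕ)
    (hi1 : 1 ≤ i) (hin : i ≤ n) (hj2 : 2 ≤ j) (hjm : j ≤ m) (ht2 : 2 ≤ t) :
    AcostCC prefs α util i j t =
      min (AcostCC prefs α util i (j - 1) t)
        (sInf { w : ℕ | ∃ istar : ℕ, istar < i ∧
          w = combineCC util (AcostCC prefs α util istar (j - 1) (t - 1))
                (aggCC util
                  (Finset.univ.filter (fun l : Fin n => istar ≤ (l : ℕ) ∧ (l : ℕ) < i))
                  (fun l => α ((prefs l ⟨j - 1, by omega⟩ : ℕ) + 1))) }) := by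
  classical
  have hm : 0 < m := by omega
  have hjm' : j - 1 < m := by omega
  refine le_antisymm (le_min ?_ ?_) ?_
  · -- LHS ≤ A[i, j-1, t]
    obtain ⟨Φ, h1, h2, h3⟩ :=
      acost_attained (i := i) (j := j - 1) (t := t) prefs α util hm (by omega) (by omega)
    rw [h3]
    exact acost_le_of prefs α util Φ (fun l hl => by have := h1 l hl; omega) h2
  · -- LHS ≤ sInf over istar
    show AcostCC prefs α util i j t ≤
      sInf { w : ℕ | ∃ istar : ℕ, istar < i ∧
        w = combineCC util (AcostCC prefs α util istar (j - 1) (t - 1))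
              (aggCC util
                (Finset.univ.filter (fun l : Fin n => istar ≤ (l : ℕ) ∧ (l : ℕ) < i))
                (fun l => α ((prefs l ⟨j - 1, hjm'⟩ : ℕ) + 1))) }
    obtain ⟨istar, histar, heq⟩ := Nat.sInf_mem (⟨_, 0, hi1, rfl⟩ : Set.Nonempty
      { w : ℕ | ∃ istar : ℕ, istar < i ∧
        w = combineCC util (AcostCC prefs α util istar (j - 1) (t - 1))
              (aggCC util
                (Finset.univ.filter (fun l : Fin n => istar ≤ (l : ℕ) ∧ (l : ℕ) < i))
                (fun l => α ((prefs l ⟨j - 1, hjm'⟩ : ℕ) + 1))) })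
    rw [heq]
    obtain ⟨Φ', h1', h2', h3'⟩ :=
      acost_attained (i := istar) (j := j - 1) (t := t - 1) prefs α util hm (by omega) (by omega)
    have hcond1 : ∀ l : Fin n, (l : ℕ) < i →
        (((fun l : Fin n => if (l : ℕ) < istar then Φ' l else ⟨j - 1, hjm'⟩) l : Fin m) : ℕ) < j := by
      intro l hl
      by_cases h : (l : ℕ) < istar
      · simp only [if_pos h]; have := h1' l h; omega
      · simp only [if_neg h]; omega
    have hcond2 : ((Finset.univ.filter (fun l : Fin n => (l : ℕ) < i)).image
        (fun l : Fin n => if (l : ℕ) < istar then Φ' l else ⟨j - 1, hjm'⟩)).card ≤ t := by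
      have hsub : (Finset.univ.filter (fun l : Fin n => (l : ℕ) < i)).image
          (fun l : Fin n => if (l : ℕ) < istar then Φ' l else (⟨j - 1, hjm'⟩ : Fin m)) ⊆
          ((Finset.univ.filter (fun l : Fin n => (l : ℕ) < istar)).image Φ') ∪ {⟨j - 1, hjm'⟩} := by
        intro x hx
        obtain ⟨l, hl, hx⟩ := Finset.mem_image.1 hx
        rw [Finset.mem_union]
        by_cases h : (l : ℕ) < istar
        · exact Or.inl (Finset.mem_image.2 ⟨l, by simp [h], by simpa [if_pos h] using hx⟩)
        · simp only [if_neg h] at hx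
          exact Or.inr (by simp [← hx])
      refine le_trans (Finset.card_le_card hsub) (le_trans (Finset.card_union_le _ _) ?_)
      simp only [Finset.card_singleton]
      omega
    refine le_trans (acost_le_of prefs α util _ hcond1 hcond2) (le_of_eq ?_)
    have hunion : (Finset.univ.filter (fun l : Fin n => (l : ℕ) < istar)) ∪
        (Finset.univ.filter (fun l : Fin n => istar ≤ (l : ℕ) ∧ (l : ℕ) < i)) =
        (Finset.univ.filter (fun l : Fin n => (l : ℕ) < i)) := by
      ext x
      simp only [Finset.mem_union, Finset.mem_filter, Finset.mem_univ, true_and]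
      omega
    have hdisj : Disjoint (Finset.univ.filter (fun l : Fin n => (l : ℕ) < istar))
        (Finset.univ.filter (fun l : Fin n => istar ≤ (l : ℕ) ∧ (l : ℕ) < i)) := by
      rw [Finset.disjoint_left]
      intro x hx hx'
      simp only [Finset.mem_filter, Finset.mem_univ, true_and] at hx hx'
      omega
    rw [← hunion, aggCC_union util hdisj, h3']
    refine congrArg₂ (combineCC util) ?_ ?_
    · refine aggCC_congr util (fun l hl => ?_)
      rw [Finset.mem_filter] at hl
      simp [hl.2]
    · refine aggCC_congr util (fun l hl => ?_)
      rw [Finset.mem_filter] at hl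
      simp [Nat.not_lt.2 hl.2.1]
  · -- min ≤ LHS
    obtain ⟨Φ, h1, h2, h3⟩ :=
      acost_attained (i := i) (j := j) (t := t) prefs α util hm (by omega) (by omega)
    rw [h3]
    by_cases hA : ∀ l : Fin n, (l : ℕ) < i → Φ l ≠ ⟨j - 1, hjm'⟩
    · refine min_le_of_left_le ?_
      refine acost_le_of prefs α util Φ (fun l hl => ?_) h2
      have hv : (Φ l : ℕ) ≠ j - 1 := fun hv => hA l hl (Fin.ext hv)
      have := h1 l hl
      omega
    · push_neg at hA
      obtain ⟨l1, hl1i, hl1⟩ := hA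
      set S := (Finset.univ.filter (fun l : Fin n => (l : ℕ) < i)).image Φ with hSdef
      have hjcS : (⟨j - 1, hjm'⟩ : Fin m) ∈ S := by
        rw [hSdef]
        exact Finset.mem_image.2 ⟨l1, by simp [hl1i], hl1⟩
      have hSj : ∀ a ∈ S, (a : ℕ) < j := by
        intro a ha
        rw [hSdef] at ha
        obtain ⟨l, hl, ha⟩ := Finset.mem_image.1 ha
        rw [Finset.mem_filter] at hl
        rw [← ha]
        exact h1 l hl.2
      set P : Fin n → Prop := fun l => ∀ a ∈ S, a ≠ ⟨j - 1, hjm'⟩ →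
        α ((prefs l ⟨j - 1, hjm'⟩ : ℕ) + 1) < α ((prefs l a : ℕ) + 1) with hPdef
      have hrep : ∀ l : Fin n, ∃ a, a ∈ S ∧ (¬ P l → (a ≠ ⟨j - 1, hjm'⟩ ∧
          α ((prefs l a : ℕ) + 1) ≤ α ((prefs l ⟨j - 1, hjm'⟩ : ℕ) + 1))) := by
        intro l
        by_cases hp : P l
        · exact ⟨_, hjcS, fun h => absurd hp h⟩
        · have hp' := hp
          simp only [hPdef] at hp'
          push_neg at hp'
          obtain ⟨a, haS, hane, hle⟩ := hp'
          exact ⟨a, haS, fun _ => ⟨hane, hle⟩⟩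
      choose rep hrepS hrepP using hrep
      have hrep2 : ∀ l : Fin n, (l : ℕ) < i → ¬ P l →
          (((if Φ l = ⟨j - 1, hjm'⟩ then rep l else Φ l) : Fin m) ∈ S ∧
           (if Φ l = ⟨j - 1, hjm'⟩ then rep l else Φ l) ≠ ⟨j - 1, hjm'⟩ ∧
           α ((prefs l (if Φ l = ⟨j - 1, hjm'⟩ then rep l else Φ l) : ℕ) + 1) ≤
             α ((prefs l (Φ l) : ℕ) + 1)) := by
        intro l hl hnp
        by_cases h : Φ l = ⟨j - 1, hjm'⟩
        · obtain ⟨hne, hle⟩ := hrepP l hnp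
          simp only [if_pos h]
          exact ⟨hrepS l, hne, by rw [h]; exact hle⟩
        · simp only [if_neg h]
          refine ⟨?_, h, le_rfl⟩
          rw [hSdef]
          exact Finset.mem_image.2 ⟨l, by simp [hl], rfl⟩
      by_cases hB : ∃ l : Fin n, (l : ℕ) < i ∧ P l
      · -- some voter strictly prefers c_{j-1} to all other used candidates
        have hQ : ∃ k, ∃ l : Fin n, (l : ℕ) = k ∧ (l : ℕ) < i ∧ P l := by
          obtain ⟨l0, hl0i, hl0P⟩ := hB
          exact ⟨l0, l0, rfl, hl0i, hl0P⟩
        obtain ⟨lstar, hlstar_eq, hlstar_i, hlstar_P⟩ := Nat.find_spec hQ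
        set istar := Nat.find hQ with histardef
        have histar_i : istar < i := by omega
        have hmin : ∀ l : Fin n, (l : ℕ) < istar → ¬ P l := by
          intro l hl hPl
          exact Nat.find_min hQ (by omega) ⟨l, rfl, by omega, hPl⟩
        refine min_le_of_right_le ?_
        refine le_trans (Nat.sInf_le ⟨istar, histar_i, rfl⟩) ?_
        have hunion : (Finset.univ.filter (fun l : Fin n => (l : ℕ) < istar)) ∪
            (Finset.univ.filter (fun l : Fin n => istar ≤ (l : ℕ) ∧ (l : ℕ) < i)) =
            (Finset.univ.filter (fun l : Fin n => (l : ℕ) < i)) := by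
          ext x
          simp only [Finset.mem_union, Finset.mem_filter, Finset.mem_univ, true_and]
          omega
        have hdisj : Disjoint (Finset.univ.filter (fun l : Fin n => (l : ℕ) < istar))
            (Finset.univ.filter (fun l : Fin n => istar ≤ (l : ℕ) ∧ (l : ℕ) < i)) := by
          rw [Finset.disjoint_left]
          intro x hx hx'
          simp only [Finset.mem_filter, Finset.mem_univ, true_and] at hx hx'
          omega
        rw [← hunion, aggCC_union util hdisj]
        refine combineCC_mono util ?_ ?_
        · -- prefix part
          refine le_trans (acost_le_of prefs α util
            (fun l : Fin n => if Φ l = ⟨j - 1, hjm'⟩ then rep l else Φ l)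
            (fun l hl => ?_) ?_) (aggCC_mono util (fun l hl => ?_))
          · have h := hrep2 l (by omega) (hmin l hl)
            have hlt := hSj _ h.1
            have hne : ((if Φ l = ⟨j - 1, hjm'⟩ then rep l else Φ l : Fin m) : ℕ) ≠ j - 1 :=
              fun hv => h.2.1 (Fin.ext hv)
            show ((if Φ l = ⟨j - 1, hjm'⟩ then rep l else Φ l : Fin m) : ℕ) < j - 1
            omega
          · refine le_trans (Finset.card_le_card
              (show _ ⊆ S.erase ⟨j - 1, hjm'⟩ from fun x hx => ?_)) ?_
            · obtain ⟨l, hl, hx⟩ := Finset.mem_image.1 hx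
              rw [Finset.mem_filter] at hl
              have h := hrep2 l (by omega) (hmin l hl.2)
              rw [← hx]
              exact Finset.mem_erase.2 ⟨h.2.1, h.1⟩
            · rw [Finset.card_erase_of_mem hjcS]
              omega
          · rw [Finset.mem_filter] at hl
            exact (hrep2 l (by omega) (hmin l hl.2)).2.2
        · -- block part
          refine aggCC_mono util (fun l hl => ?_)
          rw [Finset.mem_filter] at hl
          obtain ⟨-, hl1', hl2'⟩ := hl
          show α ((prefs l ⟨j - 1, hjm'⟩ : ℕ) + 1) ≤ α ((prefs l (Φ l) : ℕ) + 1)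
          by_cases h : Φ l = ⟨j - 1, hjm'⟩
          · rw [h]
          · have haS : Φ l ∈ S := by
              rw [hSdef]
              exact Finset.mem_image.2 ⟨l, by simp [hl2'], rfl⟩
            have hstrict := hlstar_P (Φ l) haS h
            have hpos : (prefs lstar ⟨j - 1, hjm'⟩ : ℕ) < (prefs lstar (Φ l) : ℕ) := by
              by_contra hc
              push_neg at hc
              exact absurd (hα (Nat.add_le_add_right hc 1)) (not_le.2 hstrict)
            have hav : (prefs ⟨0, hn⟩ (Φ l) : ℕ) < (prefs ⟨0, hn⟩ ⟨j - 1, hjm'⟩ : ℕ) := by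
              rw [hfirst]
              simp only [Equiv.refl_apply]
              have hlt := hSj _ haS
              have hne : (Φ l : ℕ) ≠ j - 1 := fun hv => h (Fin.ext hv)
              show (Φ l : ℕ) < j - 1
              omega
            obtain ⟨θ, hθ⟩ := hsc _ _ hav
            have h1θ : ¬ ((lstar : ℕ) < θ) := fun hlt => by
              have := (hθ lstar).2 hlt
              omega
            have h2θ : ¬ ((l : ℕ) < θ) := by omega
            have hle : (prefs l ⟨j - 1, hjm'⟩ : ℕ) ≤ (prefs l (Φ l) : ℕ) := by
              by_contra hc
              push_neg at hc
              exact h2θ ((hθ l).1 hc)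
            exact hα (Nat.add_le_add_right hle 1)
      · -- everyone weakly prefers some other used candidate: drop c_{j-1}
        push_neg at hB
        refine min_le_of_left_le ?_
        refine le_trans (acost_le_of prefs α util
          (fun l : Fin n => if Φ l = ⟨j - 1, hjm'⟩ then rep l else Φ l)
          (fun l hl => ?_) ?_) (aggCC_mono util (fun l hl => ?_))
        · have h := hrep2 l hl (hB l hl)
          have hlt := hSj _ h.1
          have hne : ((if Φ l = ⟨j - 1, hjm'⟩ then rep l else Φ l : Fin m) : ℕ) ≠ j - 1 :=
            fun hv => h.2.1 (Fin.ext hv)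
          show ((if Φ l = ⟨j - 1, hjm'⟩ then rep l else Φ l : Fin m) : ℕ) < j - 1
          omega
        · refine le_trans (Finset.card_le_card
            (show _ ⊆ S.erase ⟨j - 1, hjm'⟩ from fun x hx => ?_)) ?_
          · obtain ⟨l, hl, hx⟩ := Finset.mem_image.1 hx
            rw [Finset.mem_filter] at hl
            have h := hrep2 l hl.2 (hB l hl.2)
            rw [← hx]
            exact Finset.mem_erase.2 ⟨h.2.1, h.1⟩
          · rw [Finset.card_erase_of_mem hjcS]
            omega
        · rw [Finset.mem_filter] at hl
          exact (hrep2 l hl.2 (hB l hl.2)).2.2
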